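/- Let t ≥ 2 be an integer and let G = (V,E) be a finite connected graph that is not a cycle and that contains no path v_1, v_2, …, v_t of t vertices in which every v_i has degree exactly 2 in G. Let d_2 be the number of vertices of G of degree exactly 2 and d_{≥3} the number of vertices of degree at least 3. Then |E| ≥ (1 + 1/(4t))·(d_2 + d_{≥3}). -/

import Mathlib

open Finset SimpleGraph
set_option linter.unusedSectionVars false
set_option maxHeartbeats 1000000

namespace L59
variable {V : Type*} [Fintype V] [DecidableEq V] (G : SimpleGraph V) [DecidableRel G.Adj]

lemma deg2_resolve {c a b d : V} (hc : G.degree c = 2) (ha : G.Adj c a) (hb : G.Adj c b)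
    (hab : a ≠ b) (hd : G.Adj c d) : d = a ∨ d = b := by
  have hsub : ({a, b} : Finset V) ⊆ G.neighborFinset c := by
    intro x hx
    simp only [Finset.mem_insert, Finset.mem_singleton] at hx
    rcases hx with rfl | rfl <;> simpa [SimpleGraph.mem_neighborFinset]
  have hcard : ({a, b} : Finset V).card = 2 := by
    rw [Finset.card_insert_of_notMem (by simpa using hab), Finset.card_singleton]
  have heq : ({a, b} : Finset V) = G.neighborFinset c :=
    Finset.eq_of_subset_of_card_le hsub
      (by rw [hcard, card_neighborFinset_eq_degree, hc])
  have : d ∈ ({a, b} : Finset V) := by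
    rw [heq]; simpa [SimpleGraph.mem_neighborFinset] using hd
  simpa using this

lemma getVert_eq_getD {u v : V} (q : G.Walk u v) (i : ℕ) :
    q.getVert i = q.support.getD i v := by
  induction q generalizing i with
  | nil => cases i <;> simp [Walk.getVert]
  | cons h p ih =>
    cases i with
    | zero => simp [Walk.getVert_zero]
    | succ n => simpa [Walk.getVert_cons_succ, Walk.support_cons] using ih n

lemma getVert_inj {u v : V} {q : G.Walk u v} (hq : q.IsPath) {i j : ℕ}
    (hi : i ≤ q.length) (hj : j ≤ q.length) (h : q.getVert i = q.getVert j) : i = j := by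
  have hlen := q.length_support
  have hi' : i < q.support.length := by omega
  have hj' : j < q.support.length := by omega
  rw [getVert_eq_getD, getVert_eq_getD, List.getD_eq_getElem?_getD,
    List.getD_eq_getElem?_getD, List.getElem?_eq_getElem hi', List.getElem?_eq_getElem hj'] at h
  have hnd : q.support.Nodup := (Walk.isPath_def q).mp hq
  exact (hnd.getElem_inj_iff).mp (by simpa using h)

lemma mem_of_walk_closed (s : Set V) (hclosed : ∀ x ∈ s, ∀ y, G.Adj x y → y ∈ s) :
    ∀ {a b : V}, G.Walk a b → a ∈ s → b ∈ s := by
  intro a b w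
  induction w with
  | nil => exact id
  | cons h p ih => intro ha; exact ih (hclosed _ ha _ h)

lemma extend (hconn : G.Connected) (hnotcycle : ¬ ∀ v, G.degree v = 2)
    {v u : V} (p : G.Walk v u) (hp : p.IsPath) (hlen : 1 ≤ p.length)
    (hdeg : ∀ z ∈ p.support, G.degree z = 2) :
    ∃ z, G.Adj u z ∧ z ∉ p.support := by
  by_contra hcon
  push_neg at hcon
  set n := p.length with hn
  have mem_gv : ∀ j, j ≤ n → p.getVert j ∈ p.support := fun j hj =>
    Walk.mem_support_iff_exists_getVert.mpr ⟨j, rfl, hj⟩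
  have hgvn : p.getVert n = u := p.getVert_length
  have hdu : G.degree u = 2 := hdeg u p.end_mem_support
  have hprev : G.Adj u (p.getVert (n - 1)) := by
    have h1 := p.adj_getVert_succ (i := n - 1) (by omega)
    rw [show n - 1 + 1 = n by omega, hgvn] at h1
    exact h1.symm
  obtain ⟨z, hzmem, hzprev⟩ :=
    Finset.exists_mem_ne (s := G.neighborFinset u)
      (by rw [card_neighborFinset_eq_degree, hdu]; norm_num) (p.getVert (n - 1))
  rw [SimpleGraph.mem_neighborFinset] at hzmem
  have huz : G.Adj u z := hzmem
  have hzu : z ≠ u := fun h => G.irrefl (h ▸ huz)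
  have hzsup : z ∈ p.support := hcon z huz
  obtain ⟨i, hiz, hin⟩ := Walk.mem_support_iff_exists_getVert.mp hzsup
  have hine : i ≠ n := fun h => hzu (by rw [← hiz, h, hgvn])
  have hine1 : i ≠ n - 1 := fun h => hzprev (by rw [← hiz, h])
  rcases Nat.eq_zero_or_pos i with hi0 | hipos
  · -- z = v : graph is a closed cycle on the support
    have hzv : z = v := by rw [← hiz, hi0, Walk.getVert_zero]
    have hn2 : 2 ≤ n := by omega
    have hclosed : ∀ x ∈ {x | x ∈ p.support}, ∀ y, G.Adj x y → y ∈ {x | x ∈ p.support} := by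
      intro x hx y hxy
      obtain ⟨j, hjx, hjn⟩ := Walk.mem_support_iff_exists_getVert.mp hx
      have hdx : G.degree x = 2 := hdeg x hx
      rcases Nat.eq_zero_or_pos j with hj0 | hjpos
      · -- x = v
        have hxv : x = v := by rw [← hjx, hj0, Walk.getVert_zero]
        subst hxv
        have ha : G.Adj x (p.getVert 1) := by
          have h1 := p.adj_getVert_succ (i := 0) (by omega)
          rwa [Walk.getVert_zero] at h1
        have hb : G.Adj x u := hzv ▸ huz.symm
        have hne : p.getVert 1 ≠ u := by
          intro h
          have h2 : p.getVert 1 = p.getVert n := h.trans hgvn.symm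
          have := getVert_inj G hp (by omega) (le_refl n) h2
          omega
        rcases deg2_resolve G hdx ha hb hne hxy with rfl | rfl
        · exact mem_gv 1 (by omega)
        · exact p.end_mem_support
      · rcases eq_or_ne j n with hjn' | hjn'
        · -- x = u
          have hxu : x = u := by rw [← hjx, hjn', hgvn]
          subst hxu
          have hb : G.Adj x v := hzv ▸ huz
          have hne : p.getVert (n - 1) ≠ v := by
            intro h
            have h2 : p.getVert (n - 1) = p.getVert 0 := h.trans (Walk.getVert_zero p).symm
            have := getVert_inj G hp (by omega) (by omega) h2
            omega
          rcases deg2_resolve G hdx hprev hb hne hxy with rfl | rfl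
          · exact mem_gv (n - 1) (by omega)
          · exact p.start_mem_support
        · -- interior
          have hjlt : j < n := by omega
          have ha : G.Adj x (p.getVert (j - 1)) := by
            have h1 := p.adj_getVert_succ (i := j - 1) (by omega)
            rw [show j - 1 + 1 = j by omega, hjx] at h1
            exact h1.symm
          have hb : G.Adj x (p.getVert (j + 1)) := by
            have h1 := p.adj_getVert_succ (i := j) (by omega)
            rwa [hjx] at h1
          have hne : p.getVert (j - 1) ≠ p.getVert (j + 1) := by
            intro h
            have := getVert_inj G hp (by omega) (by omega) h
            omega
          rcases deg2_resolve G hdx ha hb hne hxy with rfl | rfl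
          · exact mem_gv (j - 1) (by omega)
          · exact mem_gv (j + 1) (by omega)
    push_neg at hnotcycle
    obtain ⟨w, hw⟩ := hnotcycle
    have hwsup : w ∈ p.support := by
      have := mem_of_walk_closed G {x | x ∈ p.support} hclosed
        ((hconn.preconnected v w).some) p.start_mem_support
      exact this
    exact hw (hdeg w hwsup)
  · -- interior z has three neighbors
    have hilt : i < n := by omega
    have hile : i + 1 ≤ n - 1 := by omega
    have hdz : G.degree z = 2 := hdeg z hzsup
    have ha : G.Adj z (p.getVert (i - 1)) := by
      have h1 := p.adj_getVert_succ (i := i - 1) (by omega)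
      rw [show i - 1 + 1 = i by omega, hiz] at h1
      exact h1.symm
    have hb : G.Adj z (p.getVert (i + 1)) := by
      have h1 := p.adj_getVert_succ (i := i) (by omega)
      rwa [hiz] at h1
    have hne : p.getVert (i - 1) ≠ p.getVert (i + 1) := by
      intro h
      have := getVert_inj G hp (by omega) (by omega) h
      omega
    rcases deg2_resolve G hdz ha hb hne huz.symm with h | h
    · have h2 : p.getVert n = p.getVert (i - 1) := hgvn.trans h
      have := getVert_inj G hp (le_refl n) (by omega) h2
      omega
    · have h2 : p.getVert n = p.getVert (i + 1) := hgvn.trans h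
      have := getVert_inj G hp (le_refl n) (by omega) h2
      omega


lemma isPath_concat {v u z : V} (p : G.Walk v u) (h : G.Adj u z) (hp : p.IsPath)
    (hz : z ∉ p.support) : (p.concat h).IsPath := by
  rw [← Walk.isPath_reverse_iff, Walk.reverse_concat]
  exact (hp.reverse).cons (by simpa [Walk.support_reverse] using hz)

lemma support_getElem_eq {v u : V} (p : G.Walk v u) {i : ℕ} (hi : i < p.support.length) :
    p.support[i] = p.getVert i := by
  rw [getVert_eq_getD G, List.getD_eq_getElem?_getD, List.getElem?_eq_getElem hi]
  rfl

lemma getVert_concat_of_le {v u z : V} (p : G.Walk v u) (h : G.Adj u z) {i : ℕ}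
    (hi : i ≤ p.length) : (p.concat h).getVert i = p.getVert i := by
  have hi1 : i < p.support.length := by rw [Walk.length_support]; omega
  have hi2 : i < (p.concat h).support.length := by
    rw [Walk.length_support, Walk.length_concat]; omega
  rw [← support_getElem_eq G p hi1, ← support_getElem_eq G (p.concat h) hi2]
  have : (p.concat h).support[i] = (p.support ++ [z])[i]'(by
      simpa [Walk.support_concat, List.concat_eq_append] using hi2) := by
    congr 1 <;> simp [Walk.support_concat, List.concat_eq_append]
  rw [this, List.getElem_append_left hi1]


lemma escape_aux (hconn : G.Connected) (hnotcycle : ¬ ∀ v, G.degree v = 2) {t : ℕ}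
    (hnopath : ¬ ∃ (u v : V) (w : G.Walk u v), w.IsPath ∧ w.length = t - 1 ∧
      ∀ z ∈ w.support, G.degree z = 2) :
    ∀ (k : ℕ) {v u : V} (p : G.Walk v u), p.IsPath → 1 ≤ p.length →
      p.length + k = t - 1 → (∀ z ∈ p.support, z ≠ u → G.degree z = 2) →
      ∃ (u' : V) (q : G.Walk v u'), q.IsPath ∧ 1 ≤ q.length ∧ q.length ≤ t - 1 ∧
        q.getVert 1 = p.getVert 1 ∧ (∀ z ∈ q.support, z ≠ u' → G.degree z = 2) ∧
        G.degree u' ≠ 2 := by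
  intro k
  induction k with
  | zero =>
    intro v u p hp hlen hsum hdeg
    by_cases hdu : G.degree u = 2
    · exfalso
      exact hnopath ⟨v, u, p, hp, by omega, fun z hz => by
        by_cases hzu : z = u
        · exact hzu ▸ hdu
        · exact hdeg z hz hzu⟩
    · exact ⟨u, p, hp, hlen, by omega, rfl, hdeg, hdu⟩
  | succ k ih =>
    intro v u p hp hlen hsum hdeg
    by_cases hdu : G.degree u = 2
    · have hdall : ∀ z ∈ p.support, G.degree z = 2 := fun z hz => by
        by_cases hzu : z = u
        · exact hzu ▸ hdu
        · exact hdeg z hz hzu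
      obtain ⟨z, huz, hzn⟩ := extend G hconn hnotcycle p hp hlen hdall
      have hp' : (p.concat huz).IsPath := isPath_concat G p huz hp hzn
      obtain ⟨u', q, h1, h2, h3, h4, h5, h6⟩ := ih (p.concat huz) hp'
        (by rw [Walk.length_concat]; omega) (by rw [Walk.length_concat]; omega)
        (fun w hw hwz => by
          rw [Walk.support_concat, List.mem_append] at hw
          rcases hw with hw | hw
          · exact hdall w hw
          · simp at hw; exact absurd hw hwz)
      refine ⟨u', q, h1, h2, h3, ?_, h5, h6⟩
      rw [h4, getVert_concat_of_le G p huz hlen]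
    · exact ⟨u, p, hp, hlen, by omega, rfl, hdeg, hdu⟩


lemma forced : ∀ {u a b : V} (q : G.Walk u a) (q' : G.Walk u b), q.IsPath → q'.IsPath →
    q.length = q'.length → (∀ z ∈ q.support, z ≠ u → G.degree z = 2) →
    (∀ z ∈ q'.support, z ≠ u → G.degree z = 2) → q.getVert 1 = q'.getVert 1 →
    a = b ∧ q.support = q'.support := by
  intro u a b q
  induction q with
  | nil =>
    intro q' _ _ hlen _ _ _
    cases q' with
    | nil => exact ⟨rfl, rfl⟩
    | cons h p => simp [Walk.length_cons] at hlen
  | @cons u c a h r ih =>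
    intro q' hq hq' hlen hd hd' hv1
    cases q' with
    | nil => simp [Walk.length_cons] at hlen
    | @cons _ c' _ h' r' =>
      have hcc : c = c' := by
        rw [Walk.getVert_cons_succ, Walk.getVert_cons_succ, Walk.getVert_zero,
          Walk.getVert_zero] at hv1
        exact hv1
      subst hcc
      rw [Walk.cons_isPath_iff] at hq hq'
      obtain ⟨hr, hur⟩ := hq
      obtain ⟨hr', hur'⟩ := hq'
      have hlen2 : r.length = r'.length := by
        rw [Walk.length_cons, Walk.length_cons] at hlen; omega
      have hdr : ∀ z ∈ r.support, z ≠ c → G.degree z = 2 := by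
        intro z hz hzc
        exact hd z (by rw [Walk.support_cons]; exact List.mem_cons_of_mem _ hz)
          (fun hzu => hur (hzu ▸ hz))
      have hdr' : ∀ z ∈ r'.support, z ≠ c → G.degree z = 2 := by
        intro z hz hzc
        exact hd' z (by rw [Walk.support_cons]; exact List.mem_cons_of_mem _ hz)
          (fun hzu => hur' (hzu ▸ hz))
      have hgv : r.getVert 1 = r'.getVert 1 := by
        cases r with
        | nil =>
          cases r' with
          | nil => simp
          | cons h2 s2 => simp [Walk.length_cons] at hlen2
        | @cons _ d _ h2 s =>
          cases r' with
          | nil => simp [Walk.length_cons] at hlen2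
          | @cons _ d' _ h2' s' =>
            rw [Walk.getVert_cons_succ, Walk.getVert_cons_succ, Walk.getVert_zero,
              Walk.getVert_zero]
            have hcmem : c ∈ (Walk.cons h2 s).support := Walk.start_mem_support _
            have hdc : G.degree c = 2 := hd c
              (by rw [Walk.support_cons]; exact List.mem_cons_of_mem _ hcmem)
              (fun hcu => hur (hcu ▸ hcmem))
            have hdu2 : d ≠ u := fun hdu2 => hur (hdu2 ▸ (by
              rw [Walk.support_cons]; exact List.mem_cons_of_mem _ s.start_mem_support))
            have hdu2' : d' ≠ u := fun hdu2 => hur' (hdu2 ▸ (by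
              rw [Walk.support_cons]; exact List.mem_cons_of_mem _ s'.start_mem_support))
            rcases deg2_resolve G hdc h.symm h2 (fun huD => hdu2 huD.symm) h2' with hcase | hcase
            · exact absurd hcase hdu2'
            · exact hcase.symm
      obtain ⟨hab, hsup⟩ := ih r' hr hr' hlen2 hdr hdr' hgv
      exact ⟨hab, by rw [Walk.support_cons, Walk.support_cons, hsup]⟩

def Spec (t : ℕ) (v w x u : V) (ℓ : ℕ) : Prop :=
  ∃ q : G.Walk u v, q.IsPath ∧ q.length = ℓ ∧ 1 ≤ ℓ ∧ ℓ ≤ t - 1 ∧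
    q.getVert 1 = x ∧ q.getVert (ℓ - 1) = w ∧
    (∀ z ∈ q.support, z ≠ u → G.degree z = 2) ∧ G.degree u ≠ 2




lemma spec_exists (hconn : G.Connected) (hnotcycle : ¬ ∀ v, G.degree v = 2) {t : ℕ}
    (ht : 2 ≤ t)
    (hnopath : ¬ ∃ (u v : V) (w : G.Walk u v), w.IsPath ∧ w.length = t - 1 ∧
      ∀ z ∈ w.support, G.degree z = 2)
    {v w : V} (hv : G.degree v = 2) (hvw : G.Adj v w) :
    ∃ (x u : V) (ℓ : ℕ), Spec G t v w x u ℓ := by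
  have hp0 : (Walk.cons hvw Walk.nil).IsPath := by
    rw [Walk.cons_isPath_iff]
    exact ⟨Walk.IsPath.nil, by simp [hvw.ne]⟩
  obtain ⟨u', q', h1, h2, h3, h4, h5, h6⟩ := escape_aux G hconn hnotcycle hnopath (t - 2)
    (Walk.cons hvw Walk.nil) hp0 (by simp) (by simp; omega)
    (by
      intro z hz hzw
      simp [Walk.support_cons, Walk.support_nil] at hz
      rcases hz with rfl | rfl
      · exact hv
      · exact absurd rfl hzw)
  have hgv1 : q'.getVert 1 = w := by
    rw [h4, Walk.getVert_cons_succ, Walk.getVert_zero]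
  refine ⟨q'.getVert (q'.length - 1), u', q'.length, q'.reverse, h1.reverse, ?_, h2, h3, ?_, ?_, ?_, ?_⟩
  · exact q'.length_reverse
  · rw [Walk.getVert_reverse]
  · rw [Walk.getVert_reverse, show q'.length - (q'.length - 1) = 1 by omega, hgv1]
  · intro z hz hzu
    rw [Walk.support_reverse, List.mem_reverse] at hz
    exact h5 z hz hzu
  · exact h6

lemma spec_adj {t : ℕ} {v w x u : V} {ℓ : ℕ} (hs : Spec G t v w x u ℓ) : G.Adj u x := by
  obtain ⟨q, hq, hql, hl1, _, hx, _, _, _⟩ := hs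
  have := q.adj_getVert_succ (i := 0) (by omega)
  rwa [Walk.getVert_zero, hx] at this

lemma spec_unique {t : ℕ} {v w v' w' x u : V} {ℓ : ℕ}
    (hs : Spec G t v w x u ℓ) (hs' : Spec G t v' w' x u ℓ) : v = v' ∧ w = w' := by
  obtain ⟨q, hq, hql, hl1, hlt, hx, hw, hsupp, hdu⟩ := hs
  obtain ⟨q', hq', hql', _, _, hx', hw', hsupp', _⟩ := hs'
  obtain ⟨hvv, hsup⟩ := forced G q q' hq hq' (by omega) hsupp hsupp' (by rw [hx, hx'])
  subst hvv
  refine ⟨rfl, ?_⟩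
  rw [← hw, ← hw', getVert_eq_getD G, getVert_eq_getD G, hsup]

lemma main_count (hconn : G.Connected) (hnotcycle : ¬ ∀ v, G.degree v = 2) {t : ℕ}
    (ht : 2 ≤ t)
    (hnopath : ¬ ∃ (u v : V) (w : G.Walk u v), w.IsPath ∧ w.length = t - 1 ∧
      ∀ z ∈ w.support, G.degree z = 2) :
    2 * (univ.filter fun v => G.degree v = 2).card ≤
      (t - 1) * ∑ y ∈ univ.filter (fun y => G.degree y ≠ 2), G.degree y := by
  classical
  set A := univ.filter fun v : V => G.degree v = 2 with hA
  set B := univ.filter fun y : V => G.degree y ≠ 2 with hB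
  set D := A.biUnion (fun v => {v} ×ˢ G.neighborFinset v) with hD
  set T := B.biUnion (fun y => {y} ×ˢ G.neighborFinset y) with hT
  have hdisj : ∀ (s : Finset V), ∀ x ∈ s, ∀ y ∈ s, x ≠ y →
      Disjoint ({x} ×ˢ G.neighborFinset x) ({y} ×ˢ G.neighborFinset y) := by
    intro s x _ y _ hxy
    rw [Finset.disjoint_left]
    intro a ha ha'
    rw [Finset.mem_product, Finset.mem_singleton] at ha ha'
    exact hxy (ha.1 ▸ ha'.1 ▸ rfl)
  have hcardD : D.card = 2 * A.card := by
    rw [hD, Finset.card_biUnion (hdisj A)]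
    rw [Finset.sum_congr rfl (fun v hv => by
      rw [Finset.card_product, Finset.card_singleton, one_mul,
        card_neighborFinset_eq_degree, (Finset.mem_filter.mp hv).2])]
    rw [Finset.sum_const, smul_eq_mul, mul_comm]
  have hcardT : T.card = ∑ y ∈ B, G.degree y := by
    rw [hT, Finset.card_biUnion (hdisj B)]
    exact Finset.sum_congr rfl (fun v hv => by
      rw [Finset.card_product, Finset.card_singleton, one_mul,
        card_neighborFinset_eq_degree])
  have hmemD : ∀ vw : V × V, vw ∈ D ↔ (G.degree vw.1 = 2 ∧ G.Adj vw.1 vw.2) := by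
    intro vw
    rw [hD, Finset.mem_biUnion]
    constructor
    · rintro ⟨v, hv, hmem⟩
      rw [Finset.mem_product, Finset.mem_singleton] at hmem
      obtain ⟨h1, h2⟩ := hmem
      subst h1
      exact ⟨(Finset.mem_filter.mp hv).2, by rwa [SimpleGraph.mem_neighborFinset] at h2⟩
    · rintro ⟨h1, h2⟩
      exact ⟨vw.1, Finset.mem_filter.mpr ⟨Finset.mem_univ _, h1⟩,
        Finset.mem_product.mpr ⟨Finset.mem_singleton_self _,
          (SimpleGraph.mem_neighborFinset _ _ _).mpr h2⟩⟩
  have hex : ∀ vw : V × V, vw ∈ D → ∃ xuℓ : (V × V) × ℕ,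
      Spec G t vw.1 vw.2 xuℓ.1.2 xuℓ.1.1 xuℓ.2 := by
    intro vw hvw
    obtain ⟨h1, h2⟩ := (hmemD vw).mp hvw
    obtain ⟨x, u, ℓ, hs⟩ := spec_exists G hconn hnotcycle ht hnopath h1 h2
    exact ⟨((u, x), ℓ), hs⟩
  have key : D.card ≤ (T ×ˢ Finset.Icc 1 (t - 1)).card := by
    apply Finset.card_le_card_of_injOn
      (fun vw => if h : vw ∈ D then (hex vw h).choose else ((vw.1, vw.1), 0))
    · intro vw hvw
      simp only [Finset.mem_coe] at hvw ⊢
      have hs := (hex vw hvw).choose_spec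
      simp only [dif_pos hvw]
      obtain ⟨q, hq, hql, hl1, hlt, hx, hw, hsupp, hdu⟩ := hs
      rw [Finset.mem_product]
      constructor
      · rw [hT, Finset.mem_biUnion]
        refine ⟨(hex vw hvw).choose.1.1, Finset.mem_filter.mpr ⟨Finset.mem_univ _, hdu⟩,
          Finset.mem_product.mpr ⟨Finset.mem_singleton_self _, ?_⟩⟩
        rw [SimpleGraph.mem_neighborFinset]
        exact spec_adj G ⟨q, hq, hql, hl1, hlt, hx, hw, hsupp, hdu⟩
      · rw [Finset.mem_Icc]
        exact ⟨hl1, hlt⟩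
    · intro vw hvw vw' hvw' heq
      simp only [Finset.mem_coe] at hvw hvw'
      simp only [dif_pos hvw, dif_pos hvw'] at heq
      have hs := (hex vw hvw).choose_spec
      have hs' := (hex vw' hvw').choose_spec
      rw [heq] at hs
      obtain ⟨h1, h2⟩ := spec_unique G hs hs'
      exact Prod.ext h1 h2
  have hcardP : (T ×ˢ Finset.Icc 1 (t - 1)).card = T.card * (t - 1) := by
    rw [Finset.card_product, Nat.card_Icc]
    congr 1
  calc 2 * A.card = D.card := hcardD.symm
    _ ≤ (T ×ˢ Finset.Icc 1 (t - 1)).card := key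
    _ = T.card * (t - 1) := hcardP
    _ = (t - 1) * ∑ y ∈ B, G.degree y := by rw [hcardT, mul_comm]

end L59

/-- **Graph-theoretic counting lemma (Lemma 5.9).**
Let `t ≥ 2` and let `G` be a finite connected graph that is not a cycle (i.e. not all
its vertices have degree `2`) and that contains no path on `t` vertices all of whose
vertices have degree exactly `2`. If `d₂` and `d_{≥3}` denote the numbers of vertices
of degree exactly `2` and of degree at least `3`, then
`|E| ≥ (1 + 1/(4t))·(d₂ + d_{≥3})`. -/
theorem edge_count_lower_bound_of_no_long_degree_two_path
    {V : Type*} [Fintype V] [DecidableEq V] (G : SimpleGraph V) [DecidableRel G.Adj]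
    (hconn : G.Connected) (t : ℕ) (ht : 2 ≤ t)
    (hnotcycle : ¬ ∀ v, G.degree v = 2)
    (hnopath : ¬ ∃ (u v : V) (w : G.Walk u v), w.IsPath ∧ w.length = t - 1 ∧
      ∀ z ∈ w.support, G.degree z = 2) :
    (1 + 1 / (4 * (t : ℝ))) *
        (((Finset.univ.filter fun v => G.degree v = 2).card : ℝ) +
          ((Finset.univ.filter fun v => 3 ≤ G.degree v).card : ℝ)) ≤
      (G.edgeFinset.card : ℝ) := by
  classical
  have hsum : ∑ v, G.degree v = 2 * G.edgeFinset.card := G.sum_degrees_eq_twice_card_edges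
  have hsplit : ∑ v ∈ univ.filter (fun v => G.degree v = 2), G.degree v +
      ∑ v ∈ univ.filter (fun v => ¬ G.degree v = 2), G.degree v = ∑ v, G.degree v :=
    Finset.sum_filter_add_sum_filter_not univ _ _
  have hsum2 : ∑ v ∈ univ.filter (fun v => G.degree v = 2), G.degree v =
      2 * (univ.filter fun v : V => G.degree v = 2).card := by
    rw [Finset.sum_congr rfl (fun v hv => (Finset.mem_filter.mp hv).2), Finset.sum_const,
      smul_eq_mul, mul_comm]
  have h3n : 3 * (univ.filter fun v : V => 3 ≤ G.degree v).card ≤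
      ∑ v ∈ univ.filter (fun v => ¬ G.degree v = 2), G.degree v := by
    calc 3 * (univ.filter fun v : V => 3 ≤ G.degree v).card
        = ∑ v ∈ univ.filter (fun v : V => 3 ≤ G.degree v), 3 := by
          rw [Finset.sum_const, smul_eq_mul, mul_comm]
      _ ≤ ∑ v ∈ univ.filter (fun v : V => 3 ≤ G.degree v), G.degree v :=
          Finset.sum_le_sum (fun v hv => (Finset.mem_filter.mp hv).2)
      _ ≤ ∑ v ∈ univ.filter (fun v => ¬ G.degree v = 2), G.degree v :=
          Finset.sum_le_sum_of_subset (fun v hv => by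
            rw [Finset.mem_filter] at hv ⊢
            exact ⟨hv.1, by omega⟩)
  have h2d : 2 * (univ.filter fun v : V => G.degree v = 2).card ≤
      (t - 1) * ∑ y ∈ univ.filter (fun y => ¬ G.degree y = 2), G.degree y :=
    L59.main_count G hconn hnotcycle ht hnopath
  set d2 := ((univ.filter fun v : V => G.degree v = 2).card : ℝ) with hd2
  set d3 := ((univ.filter fun v : V => 3 ≤ G.degree v).card : ℝ) with hd3
  set N := ((∑ v ∈ univ.filter (fun v => ¬ G.degree v = 2), G.degree v : ℕ) : ℝ) with hN
  set E := ((G.edgeFinset.card : ℕ) : ℝ) with hE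
  have hEqn : 2 * G.edgeFinset.card =
      2 * (univ.filter fun v : V => G.degree v = 2).card +
        ∑ v ∈ univ.filter (fun v => ¬ G.degree v = 2), G.degree v := by
    rw [← hsum, ← hsplit, hsum2]
  have hEq : 2 * E = 2 * d2 + N := by
    rw [hE, hd2, hN]
    exact_mod_cast hEqn
  have h3R : 3 * d3 ≤ N := by rw [hd3, hN]; exact_mod_cast h3n
  have h4R : 2 * d2 ≤ ((t : ℝ) - 1) * N := by
    rw [hd2, hN]
    calc (2 : ℝ) * ((univ.filter fun v : V => G.degree v = 2).card : ℝ)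
        = (((2 * (univ.filter fun v : V => G.degree v = 2).card : ℕ)) : ℝ) := by
          push_cast; ring
      _ ≤ (((t - 1) * ∑ y ∈ univ.filter (fun y => ¬ G.degree y = 2), G.degree y : ℕ) : ℝ) := by
          exact_mod_cast h2d
      _ = ((t : ℝ) - 1) *
            ((∑ y ∈ univ.filter (fun y => ¬ G.degree y = 2), G.degree y : ℕ) : ℝ) := by
          push_cast [Nat.cast_sub (show 1 ≤ t by omega)]; ring
  have ht0 : (0 : ℝ) < t := by exact_mod_cast (show 0 < t by omega)
  have hN0 : (0 : ℝ) ≤ N := by rw [hN]; positivity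
  have htN : (0 : ℝ) ≤ (t : ℝ) * N := mul_nonneg ht0.le hN0
  have htd3 : (t : ℝ) * (3 * d3) ≤ (t : ℝ) * N := mul_le_mul_of_nonneg_left h3R ht0.le
  have hEq2 : (t : ℝ) * (2 * E) = (t : ℝ) * (2 * d2 + N) := by rw [hEq]
  have key : (4 * (t : ℝ) + 1) * (d2 + d3) ≤ 4 * (t : ℝ) * E := by nlinarith
  have h4t : (0 : ℝ) < 4 * (t : ℝ) := by linarith
  rw [show (1 + 1 / (4 * (t : ℝ))) = (4 * (t : ℝ) + 1) / (4 * (t : ℝ)) by field_simp]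
  rw [div_mul_eq_mul_div, div_le_iff₀ h4t]
  linarith [key]
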